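/- Let L ≥ 2 be a natural number, let σ : {0,…,L−1} → ℝ, and let i satisfy i + 1 ≤ L − 1 with σ_i · σ_{i+1} ≥ 0. Define the merged sequence τ : {0,…,L−2} → ℝ by τ_k = σ_k for k < i, τ_i = σ_i + σ_{i+1}, and τ_k = σ_{k+1} for k > i. Then TV(τ) = TV(σ) and Q(τ) = Q(σ) − |σ_i|·|σ_{i+1}|, where TV(σ) = Σ_k |σ_k| and Q(σ) = Σ_{j<k} |σ_j|·|σ_k|. -/

import Mathlib

open Finset

lemma glimm_offdiag (f : ℕ → ℝ) (n : ℕ) :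
    ∑ j ∈ Finset.range n, ∑ k ∈ Finset.Ico (j + 1) n, f j * f k
      = ((∑ k ∈ Finset.range n, f k) ^ 2 - ∑ k ∈ Finset.range n, (f k) ^ 2) / 2 := by
  induction n with
  | zero => simp
  | succ n ih =>
    have h1 : ∀ j ∈ Finset.range n,
        ∑ k ∈ Finset.Ico (j + 1) (n + 1), f j * f k
          = (∑ k ∈ Finset.Ico (j + 1) n, f j * f k) + f j * f n := by
      intro j hj
      rw [Finset.sum_Ico_succ_top (Nat.succ_le_of_lt (Finset.mem_range.mp hj))]
    rw [Finset.sum_range_succ, Finset.sum_congr rfl h1, Finset.sum_add_distrib,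
      ← Finset.sum_mul, Finset.sum_range_succ (f := f), Finset.sum_range_succ (f := fun k => f k ^ 2)]
    simp only [Finset.Ico_self, Finset.sum_empty]
    rw [ih]; ring

lemma glimm_merge_sum (m i : ℕ) (hi : i < m) (g h : ℕ → ℝ)
    (h1 : ∀ k < i, g k = h k) (h2 : ∀ k, i < k → g k = h (k + 1)) :
    ∑ k ∈ Finset.range m, g k
      = (∑ k ∈ Finset.range (m + 1), h k) - h i - h (i + 1) + g i := by
  have e1 : ∑ k ∈ Finset.range m, g k
      = ∑ k ∈ Finset.range i, g k + ∑ k ∈ Finset.Ico i m, g k := by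
    rw [Finset.range_eq_Ico, Finset.range_eq_Ico,
      Finset.sum_Ico_consecutive _ (Nat.zero_le i) (le_of_lt hi)]
  have e2 : ∑ k ∈ Finset.Ico i m, g k = g i + ∑ k ∈ Finset.Ico (i + 1) m, g k := by
    rw [← Finset.sum_eq_sum_Ico_succ_bot hi]
  have e3 : ∑ k ∈ Finset.Ico (i + 1) m, g k = ∑ k ∈ Finset.Ico (i + 1) m, h (k + 1) := by
    refine Finset.sum_congr rfl fun k hk => ?_
    exact h2 k (Nat.lt_of_lt_of_le (Nat.lt_succ_self i) (Finset.mem_Ico.mp hk).1)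
  have e4 : ∑ k ∈ Finset.Ico (i + 1) m, h (k + 1) = ∑ k ∈ Finset.Ico (i + 2) (m + 1), h k := by
    rw [Finset.sum_Ico_eq_sum_range, Finset.sum_Ico_eq_sum_range]
    have : m + 1 - (i + 2) = m - (i + 1) := by omega
    rw [this]
    refine Finset.sum_congr rfl fun k _ => ?_
    congr 1; omega
  have e5 : ∑ k ∈ Finset.range (m + 1), h k
      = ∑ k ∈ Finset.range i, h k + h i + h (i + 1) + ∑ k ∈ Finset.Ico (i + 2) (m + 1), h k := by
    rw [Finset.range_eq_Ico,
      ← Finset.sum_Ico_consecutive _ (Nat.zero_le (i + 2)) (by omega : i + 2 ≤ m + 1),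
      Finset.sum_Ico_succ_top (by omega : 0 ≤ i + 1), Finset.sum_Ico_succ_top (by omega : 0 ≤ i), Finset.range_eq_Ico]
  have e6 : ∑ k ∈ Finset.range i, g k = ∑ k ∈ Finset.range i, h k :=
    Finset.sum_congr rfl fun k hk => h1 k (Finset.mem_range.mp hk)
  rw [e1, e2, e3, e4, e6, e5]; ring

/-- Interaction without cancellation: merging two adjacent waves of the same
sign leaves the total variation `TV = Σ |σ k|` unchanged and decreases the Glimm
interaction functional `Q = Σ_{j<k} |σ j|·|σ k|` exactly by `|σ i|·|σ (i+1)|`. -/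
theorem glimm_functional_interaction_no_cancellation
    (L : ℕ) (hL : 2 ≤ L) (σ τ : ℕ → ℝ) (i : ℕ) (hi : i + 1 ≤ L - 1)
    (hsign : 0 ≤ σ i * σ (i + 1))
    (hτlt : ∀ k < i, τ k = σ k)
    (hτi : τ i = σ i + σ (i + 1))
    (hτgt : ∀ k, i < k → τ k = σ (k + 1)) :
    (∑ k ∈ Finset.range (L - 1), |τ k|) = (∑ k ∈ Finset.range L, |σ k|) ∧
    (∑ j ∈ Finset.range (L - 1), ∑ k ∈ Finset.Ico (j + 1) (L - 1), |τ j| * |τ k|)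
      = (∑ j ∈ Finset.range L, ∑ k ∈ Finset.Ico (j + 1) L, |σ j| * |σ k|)
        - |σ i| * |σ (i + 1)| := by
  obtain ⟨m, rfl⟩ : ∃ m, L = m + 1 := ⟨L - 1, by omega⟩
  have hm : i < m := by omega
  simp only [Nat.add_sub_cancel] at *
  have habs : |τ i| = |σ i| + |σ (i + 1)| := by
    rw [hτi, abs_add_eq_add_abs_iff]
    rcases le_or_gt 0 (σ i) with h | h <;> rcases le_or_gt 0 (σ (i + 1)) with h' | h'
    · left; exact ⟨h, h'⟩
    · right; constructor <;> nlinarith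
    · right; constructor <;> nlinarith
    · right; exact ⟨h.le, h'.le⟩
  have hTV : (∑ k ∈ Finset.range m, |τ k|) = ∑ k ∈ Finset.range (m + 1), |σ k| := by
    rw [glimm_merge_sum m i hm (fun k => |τ k|) (fun k => |σ k|)
      (fun k hk => by simp [hτlt k hk]) (fun k hk => by simp [hτgt k hk]), habs]
    ring
  have hSq : (∑ k ∈ Finset.range m, |τ k| ^ 2)
      = (∑ k ∈ Finset.range (m + 1), |σ k| ^ 2) + 2 * (|σ i| * |σ (i + 1)|) := by
    rw [glimm_merge_sum m i hm (fun k => |τ k| ^ 2) (fun k => |σ k| ^ 2)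
      (fun k hk => by simp [hτlt k hk]) (fun k hk => by simp [hτgt k hk]), habs]
    ring
  refine ⟨hTV, ?_⟩
  rw [glimm_offdiag, glimm_offdiag, hTV, hSq]
  ring
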